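/- For an s-stage Runge–Kutta method whose coefficients satisfy b_i a_{ij} + b_j a_{ji} − b_i b_j = 0 for all i, j, and a conservative system f with ⟨y, f(y)⟩ = 0, the RK update preserves the Euclidean norm exactly: ‖u^{n+1}‖ = ‖u^n‖. -/
import Mathlib


open scoped RealInnerProductSpace

theorem statement9 (n s : ℕ)
    (f : EuclideanSpace ℝ (Fin n) → EuclideanSpace ℝ (Fin n))
    (hf : ∀ y, ⟪y, f y⟫ = 0)
    (a : Fin s → Fin s → ℝ) (b : Fin s → ℝ) (Δt : ℝ)
    (hM : ∀ i j, b i * a i j + b j * a j i - b i * b j = 0)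
    (un : EuclideanSpace ℝ (Fin n)) (y : Fin s → EuclideanSpace ℝ (Fin n))
    (hy : ∀ i, y i = un + Δt • ∑ j, a i j • f (y j)) :
    ‖un + Δt • ∑ i, b i • f (y i)‖ = ‖un‖ := by
  set g : Fin s → Fin s → ℝ := fun i j => ⟪f (y i), f (y j)⟫ with hg
  have hgsymm : ∀ i j, g j i = g i j := fun i j => real_inner_comm _ _
  have hun : ∀ i, ⟪un, f (y i)⟫ = - (Δt * ∑ j, a i j * g j i) := by
    intro i
    have h0 : ⟪un + Δt • ∑ j, a i j • f (y j), f (y i)⟫ = (0:ℝ) := by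
      rw [← hy i]; exact hf (y i)
    rw [inner_add_left, real_inner_smul_left, sum_inner] at h0
    simp only [real_inner_smul_left, hg] at h0 ⊢
    linarith
  set S : EuclideanSpace ℝ (Fin n) := Δt • ∑ i, b i • f (y i) with hS
  have hunS : ⟪un, S⟫ = - (Δt * Δt * ∑ i, ∑ j, b i * (a i j * g j i)) := by
    rw [hS, real_inner_smul_right, inner_sum]
    simp only [real_inner_smul_right, hun]
    simp only [mul_neg, Finset.sum_neg_distrib, neg_inj, Finset.mul_sum]
    refine Finset.sum_congr rfl fun i _ => Finset.sum_congr rfl fun j _ => ?_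
    ring
  have hSS : ⟪S, S⟫ = Δt * Δt * ∑ i, ∑ j, b i * (b j * g i j) := by
    rw [hS, real_inner_smul_left, real_inner_smul_right, sum_inner]
    simp only [real_inner_smul_left, inner_sum, real_inner_smul_right, Finset.mul_sum, hg]
    refine Finset.sum_congr rfl fun i _ => Finset.sum_congr rfl fun j _ => ?_
    ring
  have key : ∑ i, ∑ j, (b i * a i j + b j * a j i - b i * b j) * g i j = 0 := by
    simp [hM]
  have hswap : ∑ i, ∑ j, b j * a j i * g i j = ∑ i, ∑ j, b i * a i j * g j i := by
    rw [Finset.sum_comm]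
  have hmain : 2 * ⟪un, S⟫ + ⟪S, S⟫ = 0 := by
    rw [hunS, hSS]
    have expand : ∑ i, ∑ j, (b i * a i j + b j * a j i - b i * b j) * g i j
        = (∑ i, ∑ j, b i * a i j * g i j) + (∑ i, ∑ j, b j * a j i * g i j)
          - ∑ i, ∑ j, b i * (b j * g i j) := by
      simp only [add_mul, sub_mul, Finset.sum_add_distrib, Finset.sum_sub_distrib, mul_assoc]
    rw [expand, hswap] at key
    have h1 : ∑ i, ∑ j, b i * a i j * g i j = ∑ i, ∑ j, b i * (a i j * g j i) := by
      refine Finset.sum_congr rfl fun i _ => Finset.sum_congr rfl fun j _ => ?_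
      rw [hgsymm]; ring
    have h2 : ∑ i, ∑ j, b i * a i j * g j i = ∑ i, ∑ j, b i * (a i j * g j i) := by
      refine Finset.sum_congr rfl fun i _ => Finset.sum_congr rfl fun j _ => ?_
      ring
    rw [h1, h2] at key
    nlinarith [key]
  have hsq : ‖un + S‖ ^ 2 = ‖un‖ ^ 2 := by
    rw [← real_inner_self_eq_norm_sq, ← real_inner_self_eq_norm_sq,
      inner_add_add_self]
    have : ⟪S, un⟫ = ⟪un, S⟫ := real_inner_comm _ _
    linarith [hmain]
  rw [← Real.sqrt_sq (norm_nonneg (un + S)), hsq, Real.sqrt_sq (norm_nonneg un)]
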